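/- The function f(x) = −c^T x + (1/θ) Σⱼ ((xⱼ/uⱼ) log(xⱼ/uⱼ) + (1 − xⱼ/uⱼ) log(1 − xⱼ/uⱼ)) on the open box {x : 0 < xⱼ < uⱼ for all j} is strongly convex with strong convexity parameter 4/(θ·(max_j uⱼ)²), i.e., its Hessian satisfies ∇²f(x) ⪰ (4/(θ·max(u)²))·I. -/
import Mathlib


theorem entropy_hessian_strong_convexity (n : ℕ) [NeZero n] (θ : ℝ) (hθ : 0 < θ)
    (u x : Fin n → ℝ) (hu : ∀ j, 0 < u j) (hx : ∀ j, 0 < x j ∧ x j < u j) :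
    (Matrix.diagonal (fun j => 1 / (θ * x j * (u j - x j)))
      - (4 / (θ * (Finset.univ.sup' Finset.univ_nonempty u)^2))
        • (1 : Matrix (Fin n) (Fin n) ℝ)).PosSemidef := by
  set M := Finset.univ.sup' Finset.univ_nonempty u with hM
  have hMpos : 0 < M := by
    obtain ⟨j⟩ := Finset.univ_nonempty (α := Fin n)
    exact lt_of_lt_of_le (hu j) (Finset.le_sup' u (Finset.mem_univ j))
  have key : ∀ j, 0 ≤ 1 / (θ * x j * (u j - x j)) - 4 / (θ * M ^ 2) := by
    intro j
    obtain ⟨hx0, hxu⟩ := hx j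
    have huM : u j ≤ M := Finset.le_sup' u (Finset.mem_univ j)
    have h1 : 0 < u j - x j := by linarith
    have hden : 0 < θ * x j * (u j - x j) := by positivity
    have hM2 : 0 < θ * M ^ 2 := by positivity
    have hub : x j * (u j - x j) ≤ M ^ 2 / 4 := by
      nlinarith [sq_nonneg (u j - 2 * x j), sq_nonneg (M - u j), mul_pos (hu j) hMpos]
    rw [sub_nonneg, div_le_div_iff₀ hM2 hden]
    nlinarith
  have : (Matrix.diagonal (fun j => 1 / (θ * x j * (u j - x j)))
      - (4 / (θ * M ^ 2)) • (1 : Matrix (Fin n) (Fin n) ℝ))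
      = Matrix.diagonal (fun j => 1 / (θ * x j * (u j - x j)) - 4 / (θ * M ^ 2)) := by
    rw [← Matrix.diagonal_one, Matrix.smul_eq_diagonal_mul, Matrix.diagonal_mul_diagonal,
      Matrix.diagonal_sub]
    congr 1
    funext j
    simp
  rw [this]
  exact Matrix.posSemidef_diagonal_iff.mpr key
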